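/- Let p be a prime and let f(x,y) = f₀xⁿ + ⋯ + f_nyⁿ be a binary form of degree n over ℚ_p with f₀ ≠ 0, with f(x,1) separable of degree n, and such that f_i/f₀ ∈ 2^{4i}·ℤ_p for i = 1, …, n. Write f(x,1) = f₀g(x) with g monic, let L = ℚ_p[x]/(g(x)) and let θ be the image of x in L. Then for every a ∈ ℚ_p with a ∉ ℤ_p, the element a − θ is invertible in L and lies in L^{×2}·ℚ_p^×; that is, there exist u ∈ L^× and t ∈ ℚ_p^× with a − θ = t·u². -/

import Mathlib

open Polynomial

noncomputable def fxOne {n : ℕ} {R : Type*} [CommRing R] (f : Fin (n+1) → R) : R[X] :=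
  ∑ i : Fin (n+1), C (f i) * X ^ (n - (i:ℕ))

section Aux

variable {p : ℕ} [Fact p.Prime]

lemma smod_iff_dvd (k : ℕ) (c c' : ℤ_[p]) :
    c ≡ c' [SMOD ((IsLocalRing.maximalIdeal ℤ_[p]) ^ k • ⊤ : Ideal ℤ_[p])] ↔
      (p : ℤ_[p]) ^ k ∣ (c - c') := by
  rw [SModEq.sub_mem, ← Ideal.one_eq_top, Ideal.smul_eq_mul, mul_one,
    PadicInt.maximalIdeal_eq_span_p, Ideal.span_singleton_pow, Ideal.mem_span_singleton]

lemma repr_equivFun_symm {R : Type*} [CommRing R] [Algebra ℤ_[p] R] {ι : Type*} [Fintype ι]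
    (b : Module.Basis ι ℤ_[p] R) (y : ι → ℤ_[p]) (i : ι) :
    b.repr (b.equivFun.symm y) i = y i := by
  have h3 := b.equivFun.apply_symm_apply y
  rw [b.equivFun_apply] at h3
  exact congrFun h3 i

lemma repr_span_p_pow {R : Type*} [CommRing R] [Algebra ℤ_[p] R] {ι : Type*} [Fintype ι]
    (b : Module.Basis ι ℤ_[p] R) (k : ℕ) (x : R) :
    x ∈ (Ideal.span {(p : R)} ^ k : Ideal R) ↔ ∀ i, (p : ℤ_[p]) ^ k ∣ b.repr x i := by
  rw [Ideal.span_singleton_pow, Ideal.mem_span_singleton]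
  constructor
  · rintro ⟨y, rfl⟩ i
    have h : (p : R) ^ k * y = ((p : ℤ_[p]) ^ k) • y := by
      rw [Algebra.smul_def, map_pow, map_natCast]
    rw [h, map_smul, Finsupp.smul_apply, smul_eq_mul]
    exact ⟨b.repr y i, rfl⟩
  · intro h
    choose y hy using h
    refine ⟨b.equivFun.symm y, ?_⟩
    apply b.repr.injective
    ext i
    have h2 : (p : R) ^ k * b.equivFun.symm y = ((p : ℤ_[p]) ^ k) • b.equivFun.symm y := by
      rw [Algebra.smul_def, map_pow, map_natCast]
    rw [hy, h2, map_smul, Finsupp.smul_apply, smul_eq_mul, repr_equivFun_symm]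

lemma isAdicComplete_of_basis {R : Type*} [CommRing R] [Algebra ℤ_[p] R] {ι : Type*} [Fintype ι]
    (b : Module.Basis ι ℤ_[p] R) : IsAdicComplete (Ideal.span {(p : R)}) R := by
  have h1 : IsHausdorff (Ideal.span {(p : R)}) R := by
    constructor
    intro x hx
    have h : ∀ i, b.repr x i = 0 := by
      intro i
      apply IsHausdorff.haus (inferInstance : IsHausdorff (IsLocalRing.maximalIdeal ℤ_[p]) ℤ_[p])
      intro k
      have hk := hx k
      rw [SModEq.zero, ← Ideal.one_eq_top, Ideal.smul_eq_mul, mul_one] at hk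
      have hdvd := (repr_span_p_pow b k x).mp hk i
      rw [SModEq.zero, ← Ideal.one_eq_top, Ideal.smul_eq_mul, mul_one,
        PadicInt.maximalIdeal_eq_span_p, Ideal.span_singleton_pow, Ideal.mem_span_singleton]
      exact hdvd
    have hx0 : b.repr x = 0 := by ext i; simpa using h i
    simpa using b.repr.map_eq_zero_iff.mp hx0
  have h2 : IsPrecomplete (Ideal.span {(p : R)}) R := by
    constructor
    intro f hf
    have key : ∀ i, ∃ Li : ℤ_[p], ∀ n, b.repr (f n) i ≡ Li
        [SMOD ((IsLocalRing.maximalIdeal ℤ_[p]) ^ n • ⊤ : Ideal ℤ_[p])] := by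
      intro i
      apply IsPrecomplete.prec
        (inferInstance : IsPrecomplete (IsLocalRing.maximalIdeal ℤ_[p]) ℤ_[p])
      intro m n hmn
      rw [smod_iff_dvd]
      have h := hf hmn
      rw [SModEq.sub_mem, ← Ideal.one_eq_top, Ideal.smul_eq_mul, mul_one] at h
      have h2 := (repr_span_p_pow b m _).mp h i
      rwa [map_sub, Finsupp.sub_apply] at h2
    choose Li hLi using key
    refine ⟨b.equivFun.symm Li, fun n => ?_⟩
    rw [SModEq.sub_mem, ← Ideal.one_eq_top, Ideal.smul_eq_mul, mul_one, repr_span_p_pow b n]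
    intro i
    have h := (smod_iff_dvd n _ _).mp (hLi i n)
    rw [map_sub, Finsupp.sub_apply, repr_equivFun_symm]
    exact h
  exact { toIsHausdorff := h1, toIsPrecomplete := h2 }

lemma aeval_fxOne {n : ℕ} {R A : Type*} [CommRing R] [CommRing A] [Algebra R A]
    (c : Fin (n+1) → R) (y : A) :
    aeval y (fxOne c) = ∑ i : Fin (n+1), algebraMap R A (c i) * y ^ (n - (i:ℕ)) := by
  simp [fxOne]

lemma eval₂_fxOne {n : ℕ} {R S : Type*} [CommRing R] [CommRing S] (φ : R →+* S)
    (c : Fin (n+1) → R) (y : S) :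
    (fxOne c).eval₂ φ y = ∑ i : Fin (n+1), φ (c i) * y ^ (n - (i:ℕ)) := by
  simp [fxOne, eval₂_finset_sum]

lemma fxOne_monic {n : ℕ} {R : Type*} [CommRing R] (c : Fin (n+1) → R) (hc : c 0 = 1) :
    (fxOne c).Monic := by
  unfold fxOne
  rw [Fin.sum_univ_succ]
  simp only [Fin.val_zero, Nat.sub_zero, hc, map_one, one_mul]
  cases n with
  | zero => simpa using monic_one
  | succ m =>
    apply monic_X_pow_add
    refine lt_of_le_of_lt (degree_sum_le _ _) ?_
    rw [Finset.sup_lt_iff (by exact_mod_cast WithBot.bot_lt_coe (m+1))]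
    intro i _
    refine lt_of_le_of_lt (degree_C_mul_X_pow_le _ _) ?_
    have hv : ((i.succ : Fin (m+2)) : ℕ) = (i : ℕ) + 1 := rfl
    have hlt : m + 1 - ((i.succ : Fin (m+2)) : ℕ) < m + 1 := by rw [hv]; omega
    exact_mod_cast hlt

end Aux

theorem stmt15 (p : ℕ) [Fact p.Prime] (n : ℕ) (f : Fin (n+1) → ℚ_[p]) (hf0 : f 0 ≠ 0)
    (hsep : (fxOne f).Separable) (hdeg : (fxOne f).natDegree = n)
    (hcoef : ∀ i : Fin (n+1), 1 ≤ (i : ℕ) →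
      ∃ z : ℤ_[p], f i / f 0 = (2 : ℚ_[p]) ^ (4 * (i : ℕ)) * (z : ℚ_[p])) :
    ∀ a : ℚ_[p], (¬ ∃ z : ℤ_[p], (z : ℚ_[p]) = a) →
      letI L := AdjoinRoot (C (f 0)⁻¹ * fxOne f)
      letI θ : L := AdjoinRoot.root (C (f 0)⁻¹ * fxOne f)
      IsUnit (algebraMap ℚ_[p] L a - θ) ∧
        ∃ (u : L) (t : ℚ_[p]), IsUnit u ∧ t ≠ 0 ∧
          algebraMap ℚ_[p] L a - θ = algebraMap ℚ_[p] L t * u ^ 2 := by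
  intro a ha
  -- basic norm facts about a
  have ha1 : 1 < ‖a‖ := by
    by_contra h
    push_neg at h
    exact ha ⟨⟨a, h⟩, rfl⟩
  have ha0 : a ≠ 0 := by
    rintro rfl
    norm_num at ha1
  have hainv : ‖a⁻¹‖ < 1 := by
    rw [norm_inv]
    exact inv_lt_one_of_one_lt₀ ha1
  set α : ℤ_[p] := ⟨a⁻¹, le_of_lt hainv⟩ with hαdef
  have hα : (p : ℤ_[p]) ∣ α := by
    rw [← PadicInt.norm_lt_one_iff_dvd]
    exact hainv
  obtain ⟨β, hβ⟩ := hα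
  -- the integral coefficients z
  have hz' : ∀ i : Fin (n+1), ∃ w : ℤ_[p],
      ((i:ℕ) = 0 → w = 1) ∧ f i / f 0 = (16 : ℚ_[p]) ^ (i:ℕ) * (w : ℚ_[p]) := by
    intro i
    rcases Nat.eq_zero_or_pos (i:ℕ) with h | h
    · refine ⟨1, fun _ => rfl, ?_⟩
      have hi0 : i = 0 := Fin.ext h
      rw [hi0, div_self hf0]
      simp
    · obtain ⟨w, hw⟩ := hcoef i h
      refine ⟨w, fun h0 => absurd h0 (by omega), ?_⟩
      rw [hw, pow_mul]
      norm_num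
  choose z hz0 hz using hz'
  have hz00 : z 0 = 1 := hz0 0 rfl
  -- the monic integral polynomial H
  set H : ℤ_[p][X] := fxOne z with hHdef
  have hH : H.Monic := fxOne_monic z hz00
  set g : ℚ_[p][X] := C (f 0)⁻¹ * fxOne f with hgdef
  have hg : g = fxOne (fun i => (16 : ℚ_[p]) ^ (i:ℕ) * (z i : ℚ_[p])) := by
    rw [hgdef]
    unfold fxOne
    rw [Finset.mul_sum]
    refine Finset.sum_congr rfl fun i _ => ?_
    rw [← mul_assoc, ← map_mul, show (f 0)⁻¹ * f i = f i / f 0 by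
      rw [div_eq_mul_inv, mul_comm], hz i]
  set L := AdjoinRoot g with hLdef
  set θ : L := AdjoinRoot.root g with hθdef
  set e : ℚ_[p] →+* L := algebraMap ℚ_[p] L with hedef
  have hθ0 : aeval θ g = 0 := by
    rw [aeval_def, AdjoinRoot.algebraMap_eq]
    exact AdjoinRoot.eval₂_root g
  have hθ0' : aeval θ (fxOne (fun i => (16 : ℚ_[p]) ^ (i:ℕ) * (z i : ℚ_[p]))) = 0 :=
    (congrArg (⇑(aeval θ)) hg).symm.trans hθ0
  have h16 : (16 : ℚ_[p]) ≠ 0 := by norm_num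
  set w : L := e (16 : ℚ_[p])⁻¹ * θ with hwdef
  set ψ : ℤ_[p] →+* L := (algebraMap ℚ_[p] L).comp (algebraMap ℤ_[p] ℚ_[p]) with hψdef
  have hψe : ∀ x : ℤ_[p], ψ x = e (x : ℚ_[p]) := by
    intro x
    rw [hψdef, RingHom.comp_apply, PadicInt.algebraMap_apply]
  -- evaluation of H at w is zero
  have hlift : H.eval₂ ψ w = 0 := by
    rw [hHdef, eval₂_fxOne]
    have step : ∀ i ∈ (Finset.univ : Finset (Fin (n+1))),
        ψ (z i) * w ^ (n - (i:ℕ))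
        = e ((16 : ℚ_[p])⁻¹ ^ n) *
          (e ((16 : ℚ_[p]) ^ (i:ℕ) * (z i : ℚ_[p])) * θ ^ (n - (i:ℕ))) := by
      intro i _
      have hi : (i:ℕ) ≤ n := Nat.lt_succ_iff.mp i.isLt
      have hpow : ((16 : ℚ_[p])⁻¹) ^ (n - (i:ℕ)) =
          (16 : ℚ_[p])⁻¹ ^ n * (16 : ℚ_[p]) ^ (i:ℕ) := by
        have hmul : (16 : ℚ_[p]) ^ n = 16 ^ (n - (i:ℕ)) * 16 ^ (i:ℕ) := by
          rw [← pow_add]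
          congr 1
          omega
        rw [inv_pow, inv_pow, hmul, mul_inv, mul_assoc,
          inv_mul_cancel₀ (pow_ne_zero _ h16), mul_one]
      calc ψ (z i) * w ^ (n - (i:ℕ))
          = e ((z i : ℚ_[p]) * ((16 : ℚ_[p])⁻¹) ^ (n - (i:ℕ))) * θ ^ (n - (i:ℕ)) := by
            rw [hψe, hwdef, mul_pow, map_mul, map_pow]
            ring
        _ = e ((16 : ℚ_[p])⁻¹ ^ n * ((16 : ℚ_[p]) ^ (i:ℕ) * (z i : ℚ_[p]))) * θ ^ (n - (i:ℕ)) := by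
            rw [hpow, show (z i : ℚ_[p]) * ((16 : ℚ_[p])⁻¹ ^ n * (16 : ℚ_[p]) ^ (i:ℕ)) =
              (16 : ℚ_[p])⁻¹ ^ n * ((16 : ℚ_[p]) ^ (i:ℕ) * (z i : ℚ_[p])) from by ring]
        _ = e ((16 : ℚ_[p])⁻¹ ^ n) *
              (e ((16 : ℚ_[p]) ^ (i:ℕ) * (z i : ℚ_[p])) * θ ^ (n - (i:ℕ))) := by
            rw [map_mul, mul_assoc]
    rw [Finset.sum_congr rfl step, ← Finset.mul_sum]
    have h3 : aeval θ (fxOne (fun i => (16 : ℚ_[p]) ^ (i:ℕ) * (z i : ℚ_[p])))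
        = ∑ i : Fin (n+1), e ((16 : ℚ_[p]) ^ (i:ℕ) * (z i : ℚ_[p])) * θ ^ (n - (i:ℕ)) := by
      rw [aeval_fxOne]
    rw [← h3, hθ0', mul_zero]
  set φ : AdjoinRoot H →+* L := AdjoinRoot.lift ψ w hlift with hφdef
  set η : AdjoinRoot H := AdjoinRoot.root H with hηdef
  -- Hensel's lemma setup
  set J : Ideal (AdjoinRoot H) := Ideal.span {(p : AdjoinRoot H)} with hJdef
  haveI hcomplete : IsAdicComplete J (AdjoinRoot H) :=
    isAdicComplete_of_basis (AdjoinRoot.powerBasis' hH).basis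
  set d : AdjoinRoot H := -(4 * algebraMap ℤ_[p] (AdjoinRoot H) α * η) with hddef
  have hdJ : d ∈ J := by
    rw [hJdef, Ideal.mem_span_singleton]
    exact ⟨-(4 * algebraMap ℤ_[p] (AdjoinRoot H) β * η), by
      rw [hddef, hβ, map_mul, map_natCast]; ring⟩
  set F : (AdjoinRoot H)[X] := X^2 + X - C d with hFdef
  have hF : F.Monic := by
    rcases subsingleton_or_nontrivial (AdjoinRoot H) with hs | hs
    · exact Subsingleton.elim _ _
    · have hF2 : F = X^2 + (X - C d) := by rw [hFdef]; ring
      rw [hF2]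
      apply monic_X_pow_add
      refine lt_of_le_of_lt (degree_sub_le _ _) ?_
      rw [degree_X, max_lt_iff]
      constructor
      · exact_mod_cast Nat.lt_succ_self 1
      · refine lt_of_le_of_lt degree_C_le ?_
        exact_mod_cast (by norm_num : (0:ℕ) < 2)
  have h₁ : F.eval 0 ∈ J := by
    have hev : F.eval 0 = -d := by rw [hFdef]; simp
    rw [hev]
    exact J.neg_mem hdJ
  have h₂ : IsUnit (Ideal.Quotient.mk J (F.derivative.eval 0)) := by
    have hev : F.derivative.eval 0 = 1 := by
      rw [hFdef]
      simp
    rw [hev, map_one]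
    exact isUnit_one
  obtain ⟨t, ht, htJ⟩ :=
    (IsAdicComplete.henselianRing (AdjoinRoot H) J).is_henselian F hF 0 h₁ h₂
  have ht' : t^2 + t = d := by
    have h := ht
    rw [Polynomial.IsRoot, hFdef] at h
    simp only [eval_sub, eval_add, eval_pow, eval_X, eval_C] at h
    linear_combination h
  set s : AdjoinRoot H := 1 + 2*t with hsdef
  have hs2 : s^2 = 1 - 16 * algebraMap ℤ_[p] (AdjoinRoot H) α * η := by
    rw [show s^2 = 1 + 4*(t^2+t) from by rw [hsdef]; ring, ht', hddef]
    ring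
  have hsu : IsUnit s := by
    have h2t : 2*t ∈ J := Ideal.mul_mem_left _ _ (by simpa using htJ)
    have hjac := (Ideal.mem_jacobson_bot).mp (IsAdicComplete.le_jacobson_bot J h2t) 1
    rw [mul_one] at hjac
    rwa [hsdef, add_comm]
  have hu : IsUnit (φ s) := hsu.map φ
  have hφη : φ η = w := AdjoinRoot.lift_root hlift
  have hφα : φ (algebraMap ℤ_[p] (AdjoinRoot H) α) = e (a⁻¹) := by
    rw [AdjoinRoot.algebraMap_eq, hφdef, AdjoinRoot.lift_of hlift, hψe]
  have h16L : (16 : L) * e (16 : ℚ_[p])⁻¹ = 1 := by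
    rw [show (16 : L) = e (16 : ℚ_[p]) from (map_ofNat e 16).symm, ← map_mul,
      mul_inv_cancel₀ h16, map_one]
  have hsq : (φ s)^2 = 1 - e a⁻¹ * θ := by
    rw [← map_pow, hs2, map_sub, map_one, map_mul, map_mul, hφη, hφα, map_ofNat]
    congr 1
    calc (16 : L) * e a⁻¹ * (e (16 : ℚ_[p])⁻¹ * θ)
        = ((16 : L) * e (16 : ℚ_[p])⁻¹) * (e a⁻¹ * θ) := by ring
      _ = e a⁻¹ * θ := by rw [h16L, one_mul]
  have key : e a - θ = e a * (φ s)^2 := by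
    rw [hsq, mul_sub, mul_one, ← mul_assoc, ← map_mul, mul_inv_cancel₀ ha0, map_one, one_mul]
  have hea : IsUnit (e a) := IsUnit.of_mul_eq_one (e a⁻¹) (by
    rw [← map_mul, mul_inv_cancel₀ ha0, map_one])
  refine ⟨?_, φ s, a, hu, ha0, key⟩
  rw [key]
  exact hea.mul (hu.pow 2)
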